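/- For a set S of prime numbers, let G_S be the additive subgroup of ℚ generated by 1 together with the elements 1/p for p ∈ S. Then for any sets S and T of prime numbers, G_S and G_T are isomorphic as abelian groups if and only if the symmetric difference of S and T is finite. -/

import Mathlib

lemma den_dvd_of_mul_eq (x : ℚ) (d : ℕ) (hd : d ≠ 0) (c : ℤ) (h : (d:ℚ) * x = (c:ℚ)) :
    x.den ∣ d := by
  have hd' : (d:ℚ) ≠ 0 := Nat.cast_ne_zero.mpr hd
  have hx : x = (c : ℚ) / ((d:ℤ) : ℚ) := by push_cast; field_simp; linarith
  have h2 := Rat.den_dvd c (d:ℤ)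
  rw [Rat.divInt_eq_div, ← hx] at h2
  exact_mod_cast h2

lemma den_mul_self (x : ℚ) : (x.den : ℚ) * x = (x.num : ℚ) := by
  rw [mul_comm]; exact Rat.mul_den_eq_num x

lemma squarefree_lcm {a b : ℕ} (ha : a ≠ 0) (hb : b ≠ 0) (hsa : Squarefree a)
    (hsb : Squarefree b) : Squarefree (Nat.lcm a b) := by
  rw [Nat.squarefree_iff_factorization_le_one (Nat.lcm_ne_zero ha hb)]
  rw [Nat.factorization_lcm ha hb]
  intro p
  rw [Nat.squarefree_iff_factorization_le_one ha] at hsa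
  rw [Nat.squarefree_iff_factorization_le_one hb] at hsb
  simp [Finsupp.sup_apply, sup_le_iff, hsa p, hsb p]

lemma add_den_dvd_lcm (x y : ℚ) : (x + y).den ∣ Nat.lcm x.den y.den := by
  set L := Nat.lcm x.den y.den with hL
  have hLx : x.den ∣ L := Nat.dvd_lcm_left _ _
  have hLy : y.den ∣ L := Nat.dvd_lcm_right _ _
  have hL0 : L ≠ 0 := Nat.lcm_ne_zero x.den_nz y.den_nz
  obtain ⟨a, ha⟩ : ∃ a, L / x.den = a := ⟨_, rfl⟩
  obtain ⟨b, hb⟩ : ∃ b, L / y.den = b := ⟨_, rfl⟩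
  apply den_dvd_of_mul_eq _ _ hL0 ((a : ℤ) * x.num + (b : ℤ) * y.num)
  have e1 : (L : ℚ) = (a : ℚ) * (x.den : ℚ) := by
    rw [← ha, ← Nat.cast_mul, Nat.div_mul_cancel hLx]
  have e2 : (L : ℚ) = (b : ℚ) * (y.den : ℚ) := by
    rw [← hb, ← Nat.cast_mul, Nat.div_mul_cancel hLy]
  have : ((↑a * x.num + ↑b * y.num : ℤ) : ℚ) = (a:ℚ) * (x.num:ℚ) + (b:ℚ) * (y.num:ℚ) := by
    push_cast; ring
  rw [this, mul_add]
  nth_rewrite 1 [e1]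
  nth_rewrite 1 [e2]
  rw [mul_assoc, mul_assoc, den_mul_self, den_mul_self]

/-- The additive subgroup of `ℚ` generated by `1` together with `1/p` for `p ∈ S`. -/
def groupOfPrimes (S : Set ℕ) : AddSubgroup ℚ :=
  AddSubgroup.closure (insert (1 : ℚ) {x : ℚ | ∃ p ∈ S, x = 1 / (p : ℚ)})

lemma good_mem_aux (S : Set ℕ) : ∀ n : ℕ, ∀ x : ℚ, x.den = n → Squarefree x.den →
    (∀ p ∈ x.den.primeFactors, p ∈ S) → x ∈ groupOfPrimes S := by
  intro n
  induction n using Nat.strong_induction_on with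
  | _ n ih =>
    intro x hden hsq hfac
    have h1mem : (1:ℚ) ∈ groupOfPrimes S := AddSubgroup.subset_closure (Set.mem_insert _ _)
    rcases eq_or_ne x.den 1 with h1 | h1
    · have hx : x = (x.num : ℚ) := by
        conv_lhs => rw [← Rat.num_div_den x]
        rw [h1]; simp
      rw [hx]
      simpa using zsmul_mem h1mem x.num
    · set p := x.den.minFac with hpdef
      have hpp : p.Prime := Nat.minFac_prime h1
      obtain ⟨m, hm⟩ := Nat.minFac_dvd x.den
      have hden0 : x.den ≠ 0 := x.den_nz
      have hm0 : m ≠ 0 := by rintro rfl; rw [mul_zero] at hm; exact hden0 hm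
      have hp0 : p ≠ 0 := hpp.ne_zero
      have hcop : Nat.Coprime p m := by
        rcases Nat.coprime_or_dvd_of_prime hpp m with h | h
        · exact h
        · exfalso
          have : p * p ∣ x.den := by rw [hm]; exact mul_dvd_mul_left p h
          exact hpp.one_lt.ne' (Nat.isUnit_iff.mp (hsq p this))
      have hpS : p ∈ S := hfac p (Nat.mem_primeFactors.mpr ⟨hpp, Nat.minFac_dvd _, hden0⟩)
      set A := Nat.gcdA p m with hA
      set B := Nat.gcdB p m with hB
      have hbez : (1 : ℤ) = p * A + m * B := by
        have := Nat.gcd_eq_gcd_ab p m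
        rwa [Nat.Coprime.gcd_eq_one hcop] at this
      set y : ℚ := (x.num * A : ℤ) / (m : ℚ) with hy
      set z : ℚ := (x.num * B : ℤ) / (p : ℚ) with hz
      have hmQ : (m:ℚ) ≠ 0 := Nat.cast_ne_zero.mpr hm0
      have hpQ : (p:ℚ) ≠ 0 := Nat.cast_ne_zero.mpr hp0
      have hzmem : z ∈ groupOfPrimes S := by
        have hgen : (1 / (p:ℚ)) ∈ groupOfPrimes S :=
          AddSubgroup.subset_closure (Set.mem_insert_iff.mpr (Or.inr ⟨p, hpS, rfl⟩))
        have : z = (x.num * B) • (1 / (p:ℚ)) := by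
          rw [hz, zsmul_eq_mul]; push_cast; ring
        rw [this]
        exact zsmul_mem hgen _
      have hydvd : y.den ∣ m := by
        apply den_dvd_of_mul_eq y m hm0 (x.num * A)
        rw [hy]; push_cast; field_simp
      have hymem : y ∈ groupOfPrimes S := by
        have hmdvd : m ∣ x.den := ⟨p, by rw [hm, mul_comm]⟩
        have hydvdden : y.den ∣ x.den := hydvd.trans hmdvd
        have hlt : y.den < n := by
          have h1 : y.den ≤ m := Nat.le_of_dvd (Nat.pos_of_ne_zero hm0) hydvd
          have h2 : m < x.den := by
            rw [hm]
            have h3 := hpp.two_le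
            have h4 := Nat.pos_of_ne_zero hm0
            calc m = 1 * m := (one_mul m).symm
            _ < p * m := (Nat.mul_lt_mul_right h4).mpr hpp.one_lt
          omega
        exact ih y.den hlt y rfl (hsq.squarefree_of_dvd hydvdden)
          (fun q hq => hfac q (Nat.primeFactors_mono hydvdden hden0 hq))
      have hxyz : x = y + z := by
        have hbezQ : (1:ℚ) = (p:ℚ) * (A:ℤ) + (m:ℚ) * (B:ℤ) := by exact_mod_cast congrArg (Int.cast : ℤ → ℚ) hbez
        have hd : ((x.den : ℚ)) = (p:ℚ) * (m:ℚ) := by exact_mod_cast congrArg (Nat.cast : ℕ → ℚ) hm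
        rw [hy, hz]
        conv_lhs => rw [← Rat.num_div_den x, hd]
        push_cast
        field_simp
        linear_combination (x.num : ℚ) * hbezQ
      rw [hxyz]
      exact add_mem hymem hzmem

lemma mem_groupOfPrimes_iff (S : Set ℕ) (hS : ∀ p ∈ S, p.Prime) (x : ℚ) :
    x ∈ groupOfPrimes S ↔ Squarefree x.den ∧ ∀ p ∈ x.den.primeFactors, p ∈ S := by
  constructor
  · intro hx
    induction hx using AddSubgroup.closure_induction with
    | mem g hg =>
      rcases Set.mem_insert_iff.mp hg with h1 | ⟨p, hpS, rfl⟩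
      · subst h1
        constructor
        · simp [Rat.den_ofNat]  -- (1:ℚ).den = 1
        · intro q hq; simp at hq
      · have hpp := hS p hpS
        have hden : ((1 / (p:ℚ)).den : ℤ) = (p : ℤ) := by
          rw [show ((p:ℚ)) = ((p:ℤ):ℚ) by push_cast; ring,
            show ((1:ℚ)) = ((1:ℤ):ℚ) by push_cast; ring]
          exact Rat.den_div_eq_of_coprime (by exact_mod_cast hpp.pos) (by simp)
        have hden' : (1 / (p:ℚ)).den = p := by exact_mod_cast hden
        rw [hden']
        exact ⟨hpp.squarefree, by rw [hpp.primeFactors]; simpa using hpS⟩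
    | zero => refine ⟨by simp, fun q hq => ?_⟩; simp at hq
    | add a b ha hb iha ihb =>
      obtain ⟨hsa, hfa⟩ := iha
      obtain ⟨hsb, hfb⟩ := ihb
      have hdvd := add_den_dvd_lcm a b
      have hL0 : Nat.lcm a.den b.den ≠ 0 := Nat.lcm_ne_zero a.den_nz b.den_nz
      have hsq : Squarefree (a + b).den :=
        (squarefree_lcm a.den_nz b.den_nz hsa hsb).squarefree_of_dvd hdvd
      refine ⟨hsq, fun q hq => ?_⟩
      have hqp : q.Prime := Nat.prime_of_mem_primeFactors hq
      have hqd : q ∣ (a+b).den := Nat.dvd_of_mem_primeFactors hq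
      have : q ∣ a.den * b.den := (hqd.trans hdvd).trans (Nat.lcm_dvd_mul _ _)
      rcases (Nat.Prime.dvd_mul hqp).mp this with h | h
      · exact hfa q (Nat.mem_primeFactors.mpr ⟨hqp, h, a.den_nz⟩)
      · exact hfb q (Nat.mem_primeFactors.mpr ⟨hqp, h, b.den_nz⟩)
    | neg a ha iha => rwa [Rat.neg_den]
  · rintro ⟨h1, h2⟩
    exact good_mem_aux S x.den x rfl h1 h2

def mulHomEquiv (S T : Set ℕ) (q : ℚ) (hq : q ≠ 0)
    (h1 : ∀ x ∈ groupOfPrimes S, q * x ∈ groupOfPrimes T)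
    (h2 : ∀ y ∈ groupOfPrimes T, q⁻¹ * y ∈ groupOfPrimes S) :
    groupOfPrimes S ≃+ groupOfPrimes T where
  toFun x := ⟨q * x, h1 x x.2⟩
  invFun y := ⟨q⁻¹ * y, h2 y y.2⟩
  left_inv x := Subtype.ext (by simp [inv_mul_cancel_left₀ hq])
  right_inv y := Subtype.ext (by simp [mul_inv_cancel_left₀ hq])
  map_add' a b := Subtype.ext (by simp [mul_add])

lemma insert_equiv (S : Set ℕ) (hS : ∀ p ∈ S, p.Prime) {p : ℕ} (hp : p.Prime) (hpS : p ∉ S) :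
    Nonempty (groupOfPrimes (insert p S) ≃+ groupOfPrimes S) := by
  have hS' : ∀ r ∈ insert p S, r.Prime := by rintro r (rfl | h); exacts [hp, hS r h]
  have hp0 : (p : ℚ) ≠ 0 := Nat.cast_ne_zero.mpr hp.ne_zero
  refine ⟨mulHomEquiv _ _ (p : ℚ) hp0 ?_ ?_⟩
  · intro x hx
    rw [mem_groupOfPrimes_iff _ hS'] at hx
    rw [mem_groupOfPrimes_iff _ hS]
    obtain ⟨hsq, hfac⟩ := hx
    by_cases hdvd : p ∣ x.den
    · obtain ⟨m, hm⟩ := hdvd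
      have hm0 : m ≠ 0 := by rintro rfl; rw [mul_zero] at hm; exact x.den_nz hm
      have hpm : ¬ p ∣ m := by
        intro h
        have : p * p ∣ x.den := by rw [hm]; exact mul_dvd_mul_left p h
        exact hp.one_lt.ne' (Nat.isUnit_iff.mp (hsq p this))
      have hdden : ((p:ℚ) * x).den ∣ m := by
        apply den_dvd_of_mul_eq _ m hm0 x.num
        have : (m:ℚ) * ((p:ℚ) * x) = (x.den : ℚ) * x := by
          rw [hm]; push_cast; ring
        rw [this, den_mul_self]
      have hmd : m ∣ x.den := ⟨p, by rw [hm, mul_comm]⟩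
      refine ⟨hsq.squarefree_of_dvd (hdden.trans hmd), fun q hq => ?_⟩
      have hqp := Nat.prime_of_mem_primeFactors hq
      have hqm : q ∣ m := (Nat.dvd_of_mem_primeFactors hq).trans hdden
      have hqS : q ∈ insert p S :=
        hfac q (Nat.mem_primeFactors.mpr ⟨hqp, hqm.trans hmd, x.den_nz⟩)
      rcases Set.mem_insert_iff.mp hqS with rfl | h
      · exact absurd hqm hpm
      · exact h
    · have hdden : ((p:ℚ) * x).den ∣ x.den := by
        apply den_dvd_of_mul_eq _ x.den x.den_nz (p * x.num)
        have : (x.den:ℚ) * ((p:ℚ) * x) = (p:ℚ) * ((x.den:ℚ) * x) := by ring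
        rw [this, den_mul_self]; push_cast; ring
      refine ⟨hsq.squarefree_of_dvd hdden, fun q hq => ?_⟩
      have hqp := Nat.prime_of_mem_primeFactors hq
      have hqd : q ∣ x.den := (Nat.dvd_of_mem_primeFactors hq).trans hdden
      have hqS : q ∈ insert p S := hfac q (Nat.mem_primeFactors.mpr ⟨hqp, hqd, x.den_nz⟩)
      rcases Set.mem_insert_iff.mp hqS with rfl | h
      · exact absurd hqd hdvd
      · exact h
  · intro y hy
    rw [mem_groupOfPrimes_iff _ hS] at hy
    rw [mem_groupOfPrimes_iff _ hS']
    obtain ⟨hsq, hfac⟩ := hy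
    have hpden : ¬ p ∣ y.den := fun h =>
      hpS (hfac p (Nat.mem_primeFactors.mpr ⟨hp, h, y.den_nz⟩))
    have hdd : ((p:ℚ)⁻¹ * y).den ∣ y.den * p := by
      apply den_dvd_of_mul_eq _ _ (Nat.mul_ne_zero y.den_nz hp.ne_zero) y.num
      have : ((y.den * p : ℕ) : ℚ) * ((p:ℚ)⁻¹ * y) = (y.den:ℚ) * y := by
        push_cast
        field_simp
      rw [this, den_mul_self]
    have hsqm : Squarefree (y.den * p) :=
      (Nat.squarefree_mul ((hp.coprime_iff_not_dvd.mpr hpden).symm)).mpr ⟨hsq, hp.squarefree⟩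
    refine ⟨hsqm.squarefree_of_dvd hdd, fun q hq => ?_⟩
    have hqp := Nat.prime_of_mem_primeFactors hq
    have hqd : q ∣ y.den * p := (Nat.dvd_of_mem_primeFactors hq).trans hdd
    rcases (Nat.Prime.dvd_mul hqp).mp hqd with h | h
    · exact Set.mem_insert_iff.mpr
        (Or.inr (hfac q (Nat.mem_primeFactors.mpr ⟨hqp, h, y.den_nz⟩)))
    · rcases (Nat.prime_dvd_prime_iff_eq hqp hp).mp h with rfl
      exact Set.mem_insert _ _

lemma union_equiv (S : Set ℕ) (hS : ∀ p ∈ S, p.Prime) (F : Finset ℕ) :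
    (∀ p ∈ F, p.Prime) → (∀ p ∈ F, p ∉ S) →
    Nonempty (groupOfPrimes (S ∪ ↑F) ≃+ groupOfPrimes S) := by
  classical
  induction F using Finset.induction_on with
  | empty =>
    intro _ _
    exact ⟨AddEquiv.addSubgroupCongr (congrArg groupOfPrimes (by simp))⟩
  | @insert p F hpF ih =>
    intro hF hd
    obtain ⟨e⟩ := ih (fun r hr => hF r (Finset.mem_insert_of_mem hr))
      (fun r hr => hd r (Finset.mem_insert_of_mem hr))
    have hSF : ∀ r ∈ S ∪ ↑F, r.Prime := by
      rintro r (h | h)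
      · exact hS r h
      · exact hF r (Finset.mem_insert_of_mem (by exact_mod_cast h))
    have hpp : p.Prime := hF p (Finset.mem_insert_self _ _)
    have hpnot : p ∉ S ∪ ↑F := by
      rintro (h | h)
      · exact hd p (Finset.mem_insert_self _ _) h
      · exact hpF (by exact_mod_cast h)
    obtain ⟨e2⟩ := insert_equiv (S ∪ ↑F) hSF hpp hpnot
    have hset : S ∪ ↑(insert p F) = insert p (S ∪ ↑F) := by
      rw [Finset.coe_insert, Set.union_insert]
    exact ⟨((AddEquiv.addSubgroupCongr (congrArg groupOfPrimes hset)).trans e2).trans e⟩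

lemma one_mem_gop (S : Set ℕ) : (1:ℚ) ∈ groupOfPrimes S :=
  AddSubgroup.subset_closure (Set.mem_insert _ _)

lemma diff_finite_of_equiv (S T : Set ℕ) (hS : ∀ p ∈ S, p.Prime) (hT : ∀ p ∈ T, p.Prime)
    (e : groupOfPrimes S ≃+ groupOfPrimes T) : (S \ T).Finite := by
  set q : ℚ := (e ⟨1, one_mem_gop S⟩ : ℚ) with hqdef
  have hq0 : q ≠ 0 := by
    intro h
    have h2 : e ⟨1, one_mem_gop S⟩ = 0 := Subtype.ext h
    have h3 := (map_eq_zero_iff e e.injective).mp h2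
    have h4 := congrArg (Subtype.val) h3
    simpa using h4
  apply Set.Finite.subset (Finset.finite_toSet q.num.natAbs.primeFactors)
  rintro p ⟨hpS, hpT⟩
  by_contra hnot
  have hpp := hS p hpS
  have hp0 : (p:ℚ) ≠ 0 := Nat.cast_ne_zero.mpr hpp.ne_zero
  have hmem : (1/(p:ℚ)) ∈ groupOfPrimes S :=
    AddSubgroup.subset_closure (Set.mem_insert_iff.mpr (Or.inr ⟨p, hpS, rfl⟩))
  set y : ℚ := (e ⟨1/(p:ℚ), hmem⟩ : ℚ) with hydef
  have hyT : y ∈ groupOfPrimes T := (e ⟨1/(p:ℚ), hmem⟩).2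
  have hsmul : (p:ℤ) • (⟨1/(p:ℚ), hmem⟩ : groupOfPrimes S) = ⟨1, one_mem_gop S⟩ := by
    ext
    push_cast
    simp [hp0]
  have hpy : (p:ℚ) * y = q := by
    have h3 := congrArg e hsmul
    rw [map_zsmul] at h3
    have h4 := congrArg Subtype.val h3
    push_cast at h4
    rw [← hydef, ← hqdef] at h4
    simpa [zsmul_eq_mul] using h4
  have e1 : (q.den:ℚ) * q = q.num := den_mul_self q
  have e2 : (y.den:ℚ) * y = y.num := den_mul_self y
  have hcross : (q.num : ℚ) * (y.den:ℚ) = (p:ℚ) * (y.num:ℚ) * (q.den:ℚ) := by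
    linear_combination (-(y.den:ℚ)) * e1 + (p:ℚ) * (q.den:ℚ) * e2 - (y.den:ℚ) * (q.den:ℚ) * hpy
  have hint : q.num * (y.den:ℤ) = (p:ℤ) * y.num * q.den := by exact_mod_cast hcross
  have hpZ : Prime (p:ℤ) := Nat.prime_iff_prime_int.mp hpp
  have hdvd : (p:ℤ) ∣ q.num * (y.den:ℤ) := ⟨y.num * q.den, by rw [hint]; ring⟩
  rcases hpZ.dvd_mul.mp hdvd with h | h
  · apply hnot
    have hq0' : q.num ≠ 0 := Rat.num_ne_zero.mpr hq0
    have : p ∣ q.num.natAbs := by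
      have := Int.natAbs_dvd_natAbs.mpr h
      simpa using this
    exact Finset.mem_coe.mpr (Nat.mem_primeFactors.mpr ⟨hpp, this, Int.natAbs_ne_zero.mpr hq0'⟩)
  · apply hpT
    have hpd : p ∣ y.den := by exact_mod_cast h
    exact ((mem_groupOfPrimes_iff T hT y).mp hyT).2 p
      (Nat.mem_primeFactors.mpr ⟨hpp, hpd, y.den_nz⟩)

/-- For sets `S`, `T` of primes, `G_S ≅ G_T` as abelian groups iff the
symmetric difference of `S` and `T` is finite. -/
theorem stmt_14 (S T : Set ℕ) (hS : ∀ p ∈ S, p.Prime) (hT : ∀ p ∈ T, p.Prime) :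
    Nonempty (groupOfPrimes S ≃+ groupOfPrimes T) ↔ ((S \ T) ∪ (T \ S)).Finite := by
  constructor
  · rintro ⟨e⟩
    exact Set.Finite.union (diff_finite_of_equiv S T hS hT e)
      (diff_finite_of_equiv T S hT hS e.symm)
  · intro h
    have h1 : (S \ T).Finite := h.subset Set.subset_union_left
    have h2 : (T \ S).Finite := h.subset Set.subset_union_right
    have hC : ∀ p ∈ S ∩ T, p.Prime := fun p hp => hS p hp.1
    obtain ⟨eS⟩ := union_equiv (S ∩ T) hC h1.toFinset
      (fun p hp => hS p ((h1.mem_toFinset.mp hp)).1)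
      (fun p hp hin => ((h1.mem_toFinset.mp hp)).2 hin.2)
    obtain ⟨eT⟩ := union_equiv (S ∩ T) hC h2.toFinset
      (fun p hp => hT p ((h2.mem_toFinset.mp hp)).1)
      (fun p hp hin => ((h2.mem_toFinset.mp hp)).2 hin.1)
    have hCS : (S ∩ T) ∪ ↑h1.toFinset = S := by
      rw [Set.Finite.coe_toFinset]
      exact Set.inter_union_diff S T
    have hCT : (S ∩ T) ∪ ↑h2.toFinset = T := by
      rw [Set.Finite.coe_toFinset, Set.inter_comm]
      exact Set.inter_union_diff T S
    exact ⟨((AddEquiv.addSubgroupCongr (congrArg groupOfPrimes hCS.symm)).trans eS).trans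
      (eT.symm.trans (AddEquiv.addSubgroupCongr (congrArg groupOfPrimes hCT)))⟩
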